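/- Let K be a field of characteristic zero and let P = x + p(x,y) and Q = y + q(x,y) be polynomials in K[x,y], where p and q contain only monomials of total degree at least 2. Then there exist a formal power series F ∈ K[[x,y]] such that F − (x² + y²) has order at least 3 (i.e. contains only terms of total degree ≥ 3), and a sequence (s_j)_{j≥1} of elements of K, such that F_x·Q − F_y·P = Σ_{j=1}^∞ s_j·(x^{2j+2} + y^{2j+2}) holds in K[[x,y]], where F_x, F_y denote the formal partial derivatives of F. (The s_j are the focal values of the Poincaré differential form P dx + Q dy.) -/

import Mathlib

open MvPolynomial

/-- The formal partial derivative of a formal power series in two variables. -/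
noncomputable def psDeriv {K : Type*} [CommSemiring K] (i : Fin 2)
    (f : MvPowerSeries (Fin 2) K) : MvPowerSeries (Fin 2) K :=
  fun e => ((e i + 1 : ℕ) : K) * MvPowerSeries.coeff (e + Finsupp.single i 1) f

namespace Focal
variable {K : Type*} [Field K] [CharZero K]

noncomputable def solve (n : ℕ) (t : K) (d : ℕ → K) : ℕ → K
  | 0 => t
  | 1 => -d 0
  | (k+2) => (((n - k : ℕ) : K) * solve n t d k - d (k+1)) / ((k+2 : ℕ) : K)

set_option linter.unusedSectionVars false

lemma solve_add (n : ℕ) (t t' : K) (d d' : ℕ → K) :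
    ∀ k, solve n (t+t') (fun j => d j + d' j) k = solve n t d k + solve n t' d' k := by
  have H : ∀ k, solve n (t+t') (fun j => d j + d' j) k = solve n t d k + solve n t' d' k ∧
      solve n (t+t') (fun j => d j + d' j) (k+1) = solve n t d (k+1) + solve n t' d' (k+1) := by
    intro k
    induction k with
    | zero => constructor <;> simp [solve] <;> ring
    | succ k ih =>
      refine ⟨ih.2, ?_⟩
      show solve n (t+t') (fun j => d j + d' j) (k+2) = _
      simp only [solve, ih.1]
      field_simp
      ring
  exact fun k => (H k).1

lemma solve_smul (n : ℕ) (a t : K) (d : ℕ → K) :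
    ∀ k, solve n (a*t) (fun j => a * d j) k = a * solve n t d k := by
  have H : ∀ k, solve n (a*t) (fun j => a * d j) k = a * solve n t d k ∧
      solve n (a*t) (fun j => a * d j) (k+1) = a * solve n t d (k+1) := by
    intro k
    induction k with
    | zero => constructor <;> simp [solve] <;> ring
    | succ k ih =>
      refine ⟨ih.2, ?_⟩
      show solve n (a*t) (fun j => a * d j) (k+2) = _
      simp only [solve, ih.1]
      field_simp
  exact fun k => (H k).1

lemma solve_eq (n : ℕ) (t : K) (d : ℕ → K) (k : ℕ) :
    solve n t d k = t * solve n 1 (fun _ => 0) k + solve n 0 d k := by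
  have h1 : solve n t d k = solve n t (fun _ => 0) k + solve n 0 d k := by
    have := solve_add n t 0 (fun _ => (0:K)) d k
    simpa using this
  have h2 : solve n t (fun _ => 0) k = t * solve n 1 (fun _ => 0) k := by
    have := solve_smul n t 1 (fun _ => (0:K)) k
    simpa using this
  rw [h1, h2]

/-- the linear operator on degree-`n` coefficient vectors -/
noncomputable def Lf (n : ℕ) (c : ℕ → K) (k : ℕ) : K :=
  (if 1 ≤ k then ((n - k + 1 : ℕ) : K) * c (k-1) else 0) - ((k+1 : ℕ) : K) * c (k+1)

lemma solve_spec (n : ℕ) (t : K) (d : ℕ → K) (k : ℕ) (hk : k + 1 ≤ n) :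
    Lf n (fun j => if j ≤ n then solve n t d j else 0) k = d k := by
  match k with
  | 0 =>
    simp only [Lf, if_neg (by omega : ¬ 1 ≤ 0)]
    rw [if_pos (by omega : 1 ≤ n)]
    simp [solve]
  | (j+1) =>
    simp only [Lf, if_pos (by omega : 1 ≤ j+1)]
    have h1 : j + 1 - 1 = j := by omega
    rw [h1, if_pos (by omega : j ≤ n), if_pos (by omega : j + 1 + 1 ≤ n)]
    show ((n - (j+1) + 1 : ℕ) : K) * solve n t d j - ((j+2 : ℕ) : K) * solve n t d (j+2) = d (j+1)
    rw [show solve n t d (j+2) = (((n - j : ℕ) : K) * solve n t d j - d (j+1)) / ((j+2 : ℕ) : K) from rfl]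
    have h2 : ((j+2 : ℕ) : K) ≠ 0 := by exact_mod_cast (by omega : (j+2:ℕ) ≠ 0)
    rw [mul_div_cancel₀ _ h2]
    have h3 : (n - (j+1) + 1 : ℕ) = n - j := by omega
    rw [h3]; ring

lemma solve_one_ne (n : ℕ) : ∀ i : ℕ, 2*i + 1 ≤ n → solve n 1 (fun _ => (0:K)) (2*i) ≠ 0 := by
  intro i
  induction i with
  | zero => intro _; simp [solve]
  | succ i ih =>
    intro h
    have h' : 2*i + 1 ≤ n := by omega
    show solve n 1 (fun _ => (0:K)) (2*i+2) ≠ 0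
    rw [show solve n 1 (fun _ => (0:K)) (2*i+2)
        = (((n - 2*i : ℕ) : K) * solve n 1 (fun _ => (0:K)) (2*i) - 0) / ((2*i+2 : ℕ) : K) from rfl]
    rw [sub_zero]
    apply div_ne_zero
    · exact mul_ne_zero (by exact_mod_cast (by omega : (n - 2*i : ℕ) ≠ 0)) (ih h')
    · exact_mod_cast (by omega : (2*i+2:ℕ) ≠ 0)

noncomputable def tau (n : ℕ) : ℕ → K := fun k => if k = 0 ∨ k = n then 1 else 0

lemma solve_tau_neg (n : ℕ) : ∀ i : ℕ, 2*i + 2 ≤ n →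
    ∃ r : ℚ, 0 < r ∧ solve n 0 (tau n) (2*i+1) = -((r : ℚ) : K) := by
  intro i
  induction i with
  | zero =>
    intro h
    refine ⟨1, one_pos, ?_⟩
    show -(tau n 0 : K) = _
    rw [tau, if_pos (Or.inl rfl)]
    norm_num
  | succ i ih =>
    intro h
    obtain ⟨r, hr, hs⟩ := ih (by omega)
    have hpos : (0:ℚ) < ((n - (2*i+1) : ℕ) : ℚ) := by
      exact_mod_cast (by omega : 0 < n - (2*i+1))
    refine ⟨(n - (2*i+1) : ℕ) * r / (2*i+3), by positivity, ?_⟩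
    show (((n - (2*i+1) : ℕ) : K) * solve n 0 (tau n) (2*i+1) - tau n (2*i+2)) / ((2*i+3 : ℕ) : K) = _
    rw [hs, tau, if_neg (by omega : ¬ (2*i+2 = 0 ∨ 2*i+2 = n))]
    push_cast
    field_simp
    ring

variable (p q : MvPolynomial (Fin 2) K)

noncomputable def NN (c : ℕ → ℕ → K) (e : Fin 2 →₀ ℕ) : K :=
  ∑ x ∈ Finset.HasAntidiagonal.antidiagonal e,
    (((x.1 0 + 1 : ℕ) : K) * c (x.1 0 + x.1 1 + 1) (x.1 1) * q.coeff x.2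
     - ((x.1 1 + 1 : ℕ) : K) * c (x.1 0 + x.1 1 + 1) (x.1 1 + 1) * p.coeff x.2)

noncomputable def Nk (c : ℕ → ℕ → K) (n k : ℕ) : K :=
  NN p q c (Finsupp.single 0 (n-k) + Finsupp.single 1 k)

noncomputable def numer (c : ℕ → ℕ → K) (n : ℕ) : K :=
  -Nk p q c n n - solve n 0 (fun k => -(Nk p q c n k)) (n-1)

noncomputable def denom (n : ℕ) : K :=
  if Even n then solve n 0 (tau n) (n-1) - 1 else solve n 1 (fun _ => 0) (n-1)

noncomputable def par (c : ℕ → ℕ → K) (n : ℕ) : K := numer p q c n / denom n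

noncomputable def dd (c : ℕ → ℕ → K) (n : ℕ) : ℕ → K :=
  fun k => (if Even n ∧ (k = 0 ∨ k = n) then par p q c n else 0) - Nk p q c n k

noncomputable def tp (c : ℕ → ℕ → K) (n : ℕ) : K :=
  if Even n then 0 else par p q c n

noncomputable def step (c : ℕ → ℕ → K) (n : ℕ) : ℕ → K :=
  if n ≤ 1 then fun _ => 0
  else if n = 2 then fun k => if k = 0 ∨ k = 2 then 1 else 0
  else fun k => if k ≤ n then solve n (tp p q c n) (dd p q c n) k else 0

noncomputable def hist : ℕ → ℕ → ℕ → K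
  | 0 => fun _ _ => 0
  | (N+1) => fun m => if m = N then step p q (hist N) N else hist N m

noncomputable def layer (n : ℕ) : ℕ → K := step p q (hist p q n) n

noncomputable def FF : MvPowerSeries (Fin 2) K := fun e => layer p q (e 0 + e 1) (e 1)

lemma hist_eq : ∀ N m, m < N → hist p q N m = layer p q m := by
  intro N
  induction N with
  | zero => intro m hm; omega
  | succ N ih =>
    intro m hm
    show (if m = N then step p q (hist p q N) N else hist p q N m) = _
    by_cases h : m = N
    · subst h; rw [if_pos rfl]; rfl
    · rw [if_neg h]; exact ih m (by omega)

lemma layer_zero_of_gt (n k : ℕ) (h : n < k) : layer p q n k = 0 := by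
  unfold layer step
  by_cases h1 : n ≤ 1
  · rw [if_pos h1]
  · rw [if_neg h1]
    by_cases h2 : n = 2
    · rw [if_pos h2]; rw [if_neg (by omega)]
    · rw [if_neg h2]; rw [if_neg (by omega)]

lemma denom_ne (n : ℕ) (h3 : 3 ≤ n) : denom (K := K) n ≠ 0 := by
  unfold denom
  by_cases hE : Even n
  · rw [if_pos hE]
    obtain ⟨m, hm⟩ := hE
    obtain ⟨r, hr, hs⟩ := solve_tau_neg (K := K) n (m - 1) (by omega)
    rw [show n - 1 = 2*(m-1)+1 by omega, hs]
    intro hcon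
    have : ((r : ℚ) : K) = -1 := by linear_combination -hcon
    have : (r : ℚ) = -1 := by exact_mod_cast this
    linarith
  · rw [if_neg hE]
    have hodd := Nat.odd_iff.mpr (Nat.not_even_iff.mp hE)
    obtain ⟨m, hm⟩ := hodd
    have := solve_one_ne (K := K) n m (by omega)
    rwa [show n - 1 = 2*m by omega]

lemma consist (c : ℕ → ℕ → K) (n : ℕ) (h3 : 3 ≤ n) :
    solve n (tp p q c n) (dd p q c n) (n-1) = dd p q c n n := by
  have hden := denom_ne (K := K) n h3
  by_cases hE : Even n
  · have htp : tp p q c n = 0 := if_pos hE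
    have hdd : dd p q c n = fun k => par p q c n * tau n k + (-(Nk p q c n k)) := by
      funext k
      simp only [dd, tau, hE, true_and]
      by_cases h : k = 0 ∨ k = n
      · rw [if_pos h, if_pos h]; ring
      · rw [if_neg h, if_neg h]; ring
    rw [htp, hdd]
    have h1 : solve n 0 (fun k => par p q c n * tau n k + (-(Nk p q c n k))) (n-1)
        = par p q c n * solve n 0 (tau n) (n-1) + solve n 0 (fun k => -(Nk p q c n k)) (n-1) := by
      have ha := solve_add n 0 0 (fun k => par p q c n * tau n k) (fun k => -(Nk p q c n k)) (n-1)
      have hb := solve_smul n (par p q c n) 0 (tau n) (n-1)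
      simp only [add_zero, mul_zero] at ha hb
      rw [ha, hb]
    rw [h1]
    have hn0 : ¬ (n = 0) := by omega
    simp only [hE, true_and, if_pos (Or.inr rfl : n = 0 ∨ n = n)]
    rw [show tau (K := K) n n = 1 from if_pos (Or.inr rfl)]
    have hpar : par p q c n * denom (K := K) n = numer p q c n := div_mul_cancel₀ _ hden
    rw [denom, if_pos hE] at hpar
    rw [numer] at hpar
    linear_combination hpar
  · have htp : tp p q c n = par p q c n := if_neg hE
    have hdd : dd p q c n = fun k => -(Nk p q c n k) := by
      funext k
      simp only [dd, hE, false_and, if_false]; ring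
    rw [htp, hdd, solve_eq]
    have hpar : par p q c n * denom (K := K) n = numer p q c n := div_mul_cancel₀ _ hden
    rw [denom, if_neg hE] at hpar
    rw [numer] at hpar
    simp only [hE, false_and, if_false]
    linear_combination hpar

lemma Lf_layer (n k : ℕ) (h3 : 3 ≤ n) (hk : k ≤ n) :
    Lf n (layer p q n) k = dd p q (hist p q n) n k := by
  have hl : layer p q n = fun j => if j ≤ n then solve n (tp p q (hist p q n) n) (dd p q (hist p q n) n) j else 0 := by
    unfold layer step
    rw [if_neg (by omega : ¬ n ≤ 1), if_neg (by omega : ¬ n = 2)]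
  by_cases hkn : k + 1 ≤ n
  · rw [hl]; exact solve_spec n _ _ k hkn
  · have hk' : k = n := by omega
    rw [hk']
    unfold Lf
    rw [hl]
    beta_reduce
    rw [if_neg (by omega : ¬ n + 1 ≤ n), if_pos (by omega : 1 ≤ n),
      if_pos (by omega : n - 1 ≤ n)]
    rw [show n - n + 1 = 1 by omega]
    rw [consist p q _ n h3]
    push_cast
    ring

lemma fin2_eq_iff (e e' : Fin 2 →₀ ℕ) : e = e' ↔ e 0 = e' 0 ∧ e 1 = e' 1 := by
  constructor
  · rintro rfl; exact ⟨rfl, rfl⟩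
  · rintro ⟨h0, h1⟩
    ext i
    fin_cases i
    · exact h0
    · exact h1

lemma decomp (e : Fin 2 →₀ ℕ) : e = Finsupp.single 0 (e 0) + Finsupp.single 1 (e 1) := by
  rw [fin2_eq_iff]
  constructor <;> simp [Finsupp.single_apply]

lemma psDeriv0_FF (a : Fin 2 →₀ ℕ) :
    psDeriv 0 (FF p q) a = ((a 0 + 1 : ℕ) : K) * layer p q (a 0 + a 1 + 1) (a 1) := by
  unfold psDeriv
  rw [MvPowerSeries.coeff_apply]
  show _ = ((a 0 + 1 : ℕ) : K) * layer p q (a 0 + a 1 + 1) (a 1)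
  unfold FF
  have h0 : ((a + Finsupp.single 0 1 : Fin 2 →₀ ℕ)) 0 = a 0 + 1 := by simp
  have h1 : ((a + Finsupp.single 0 1 : Fin 2 →₀ ℕ)) 1 = a 1 := by simp [Finsupp.single_apply]
  rw [h0, h1, show a 0 + 1 + a 1 = a 0 + a 1 + 1 by omega]

lemma psDeriv1_FF (a : Fin 2 →₀ ℕ) :
    psDeriv 1 (FF p q) a = ((a 1 + 1 : ℕ) : K) * layer p q (a 0 + a 1 + 1) (a 1 + 1) := by
  unfold psDeriv
  rw [MvPowerSeries.coeff_apply]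
  unfold FF
  have h0 : ((a + Finsupp.single 1 1 : Fin 2 →₀ ℕ)) 0 = a 0 := by simp [Finsupp.single_apply]
  have h1 : ((a + Finsupp.single 1 1 : Fin 2 →₀ ℕ)) 1 = a 1 + 1 := by simp
  rw [h0, h1, show a 0 + (a 1 + 1) = a 0 + a 1 + 1 by omega]

lemma sum_single (e s : Fin 2 →₀ ℕ) (f : (Fin 2 →₀ ℕ) → K) :
    ∑ x ∈ Finset.HasAntidiagonal.antidiagonal e, f x.1 * (if s = x.2 then (1:K) else 0)
    = if s ≤ e then f (e - s) else 0 := by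
  by_cases h : s ≤ e
  · rw [if_pos h]
    rw [Finset.sum_eq_single (e - s, s)]
    · simp
    · rintro ⟨a, b⟩ hab hne
      rw [Finset.HasAntidiagonal.mem_antidiagonal] at hab
      by_cases hb : s = b
      · exfalso
        apply hne
        have ha : a = e - s := by
          subst hb
          exact eq_tsub_of_add_eq hab
        rw [ha, hb]
      · rw [if_neg hb, mul_zero]
    · intro hmem
      exfalso
      apply hmem
      rw [Finset.HasAntidiagonal.mem_antidiagonal]
      exact tsub_add_cancel_of_le h
  · rw [if_neg h]
    apply Finset.sum_eq_zero
    rintro ⟨a, b⟩ hab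
    rw [Finset.HasAntidiagonal.mem_antidiagonal] at hab
    have hb : ¬ (s = b) := by
      rintro rfl
      exact h (hab ▸ le_add_self)
    rw [if_neg hb, mul_zero]

noncomputable def G : MvPowerSeries (Fin 2) K :=
  psDeriv 0 (FF p q) * ((X 1 + q : MvPolynomial (Fin 2) K) : MvPowerSeries (Fin 2) K)
    - psDeriv 1 (FF p q) * ((X 0 + p : MvPolynomial (Fin 2) K) : MvPowerSeries (Fin 2) K)

lemma coeff_G (e : Fin 2 →₀ ℕ) : MvPowerSeries.coeff (R := K) e (G p q) =
    ((if 1 ≤ e 1 then ((e 0 + 1 : ℕ) : K) * layer p q (e 0 + e 1) (e 1 - 1) else 0)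
      - ((e 1 + 1 : ℕ) : K) * layer p q (e 0 + e 1) (e 1 + 1))
    + NN p q (layer p q) e := by
  unfold G
  rw [map_sub, MvPowerSeries.coeff_mul, MvPowerSeries.coeff_mul]
  have hQ : ∀ b : Fin 2 →₀ ℕ, MvPowerSeries.coeff (R := K) b
      ((X 1 + q : MvPolynomial (Fin 2) K) : MvPowerSeries (Fin 2) K)
      = (if Finsupp.single 1 1 = b then (1:K) else 0) + q.coeff b := by
    intro b
    rw [MvPolynomial.coeff_coe, MvPolynomial.coeff_add, MvPolynomial.coeff_X']
  have hP : ∀ b : Fin 2 →₀ ℕ, MvPowerSeries.coeff (R := K) b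
      ((X 0 + p : MvPolynomial (Fin 2) K) : MvPowerSeries (Fin 2) K)
      = (if Finsupp.single 0 1 = b then (1:K) else 0) + p.coeff b := by
    intro b
    rw [MvPolynomial.coeff_coe, MvPolynomial.coeff_add, MvPolynomial.coeff_X']
  have s1 : ∑ x ∈ Finset.HasAntidiagonal.antidiagonal e,
      MvPowerSeries.coeff (R := K) x.1 (psDeriv 0 (FF p q)) * MvPowerSeries.coeff (R := K) x.2
        ((X 1 + q : MvPolynomial (Fin 2) K) : MvPowerSeries (Fin 2) K)
      = (∑ x ∈ Finset.HasAntidiagonal.antidiagonal e,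
          psDeriv 0 (FF p q) x.1 * (if Finsupp.single 1 1 = x.2 then (1:K) else 0))
        + ∑ x ∈ Finset.HasAntidiagonal.antidiagonal e, psDeriv 0 (FF p q) x.1 * q.coeff x.2 := by
    rw [← Finset.sum_add_distrib]
    apply Finset.sum_congr rfl
    intro x _
    rw [hQ, MvPowerSeries.coeff_apply, mul_add]
  have s2 : ∑ x ∈ Finset.HasAntidiagonal.antidiagonal e,
      MvPowerSeries.coeff (R := K) x.1 (psDeriv 1 (FF p q)) * MvPowerSeries.coeff (R := K) x.2
        ((X 0 + p : MvPolynomial (Fin 2) K) : MvPowerSeries (Fin 2) K)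
      = (∑ x ∈ Finset.HasAntidiagonal.antidiagonal e,
          psDeriv 1 (FF p q) x.1 * (if Finsupp.single 0 1 = x.2 then (1:K) else 0))
        + ∑ x ∈ Finset.HasAntidiagonal.antidiagonal e, psDeriv 1 (FF p q) x.1 * p.coeff x.2 := by
    rw [← Finset.sum_add_distrib]
    apply Finset.sum_congr rfl
    intro x _
    rw [hP, MvPowerSeries.coeff_apply, mul_add]
  rw [s1, s2, sum_single e _ (psDeriv 0 (FF p q)), sum_single e _ (psDeriv 1 (FF p q))]
  have hNN : (∑ x ∈ Finset.HasAntidiagonal.antidiagonal e, psDeriv 0 (FF p q) x.1 * q.coeff x.2)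
      - ∑ x ∈ Finset.HasAntidiagonal.antidiagonal e, psDeriv 1 (FF p q) x.1 * p.coeff x.2
      = NN p q (layer p q) e := by
    rw [← Finset.sum_sub_distrib]
    apply Finset.sum_congr rfl
    intro x _
    rw [psDeriv0_FF, psDeriv1_FF]
  have hL1 : (if Finsupp.single 1 1 ≤ e then psDeriv 0 (FF p q) (e - Finsupp.single 1 1) else 0)
      = (if 1 ≤ e 1 then ((e 0 + 1 : ℕ) : K) * layer p q (e 0 + e 1) (e 1 - 1) else 0) := by
    by_cases h : 1 ≤ e 1
    · rw [if_pos (Finsupp.single_le_iff.mpr h), if_pos h, psDeriv0_FF]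
      have h0 : ((e - Finsupp.single 1 1 : Fin 2 →₀ ℕ)) 0 = e 0 := by
        rw [Finsupp.tsub_apply]; simp [Finsupp.single_apply]
      have h1 : ((e - Finsupp.single 1 1 : Fin 2 →₀ ℕ)) 1 = e 1 - 1 := by
        rw [Finsupp.tsub_apply]; simp
      rw [h0, h1, show e 0 + (e 1 - 1) + 1 = e 0 + e 1 by omega]
    · rw [if_neg (fun hc => h (Finsupp.single_le_iff.mp hc)), if_neg h]
  have hL2 : (if Finsupp.single 0 1 ≤ e then psDeriv 1 (FF p q) (e - Finsupp.single 0 1) else 0)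
      = ((e 1 + 1 : ℕ) : K) * layer p q (e 0 + e 1) (e 1 + 1) := by
    by_cases h : 1 ≤ e 0
    · rw [if_pos (Finsupp.single_le_iff.mpr h), psDeriv1_FF]
      have h0 : ((e - Finsupp.single 0 1 : Fin 2 →₀ ℕ)) 0 = e 0 - 1 := by
        rw [Finsupp.tsub_apply]; simp
      have h1 : ((e - Finsupp.single 0 1 : Fin 2 →₀ ℕ)) 1 = e 1 := by
        rw [Finsupp.tsub_apply]; simp [Finsupp.single_apply]
      rw [h0, h1, show e 0 - 1 + e 1 + 1 = e 0 + e 1 by omega]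
    · rw [if_neg (fun hc => h (Finsupp.single_le_iff.mp hc))]
      have he0 : e 0 = 0 := by omega
      rw [layer_zero_of_gt p q _ _ (by omega), mul_zero]
  rw [hL1, hL2, ← hNN]
  ring

lemma NN_hist (hp : ∀ e : Fin 2 →₀ ℕ, e 0 + e 1 < 2 → p.coeff e = 0)
    (hq : ∀ e : Fin 2 →₀ ℕ, e 0 + e 1 < 2 → q.coeff e = 0) (e : Fin 2 →₀ ℕ) :
    NN p q (layer p q) e = NN p q (hist p q (e 0 + e 1)) e := by
  unfold NN
  apply Finset.sum_congr rfl
  rintro ⟨a, b⟩ hab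
  rw [Finset.HasAntidiagonal.mem_antidiagonal] at hab
  have hdeg : a 0 + b 0 = e 0 ∧ a 1 + b 1 = e 1 := by
    constructor
    · rw [← hab]; simp
    · rw [← hab]; simp
  have hq' : ∀ j : ℕ, layer p q (a 0 + a 1 + 1) j * q.coeff b
      = hist p q (e 0 + e 1) (a 0 + a 1 + 1) j * q.coeff b := by
    intro j
    by_cases hc : q.coeff b = 0
    · rw [hc, mul_zero, mul_zero]
    · have h2 : 2 ≤ b 0 + b 1 := by
        by_contra hcon
        exact hc (hq b (by omega))
      rw [hist_eq p q _ _ (by omega)]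
  have hp' : ∀ j : ℕ, layer p q (a 0 + a 1 + 1) j * p.coeff b
      = hist p q (e 0 + e 1) (a 0 + a 1 + 1) j * p.coeff b := by
    intro j
    by_cases hc : p.coeff b = 0
    · rw [hc, mul_zero, mul_zero]
    · have h2 : 2 ≤ b 0 + b 1 := by
        by_contra hcon
        exact hc (hp b (by omega))
      rw [hist_eq p q _ _ (by omega)]
  show _ = _
  rw [mul_assoc, mul_assoc, mul_assoc, mul_assoc, hq' (a 1), hp' (a 1 + 1)]

lemma NN_low (hp : ∀ e : Fin 2 →₀ ℕ, e 0 + e 1 < 2 → p.coeff e = 0)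
    (hq : ∀ e : Fin 2 →₀ ℕ, e 0 + e 1 < 2 → q.coeff e = 0) (e : Fin 2 →₀ ℕ) (h : e 0 + e 1 ≤ 2) : NN p q (layer p q) e = 0 := by
  unfold NN
  apply Finset.sum_eq_zero
  rintro ⟨a, b⟩ hab
  rw [Finset.HasAntidiagonal.mem_antidiagonal] at hab
  have hdeg : a 0 + b 0 = e 0 ∧ a 1 + b 1 = e 1 := by
    constructor
    · rw [← hab]; simp
    · rw [← hab]; simp
  have hlay : ∀ j : ℕ, a 0 + a 1 + 1 ≤ 1 → layer p q (a 0 + a 1 + 1) j = 0 := by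
    intro j hj
    unfold layer step
    rw [if_pos hj]
  by_cases hqc : q.coeff b = 0
  · by_cases hpc : p.coeff b = 0
    · rw [hqc, hpc, mul_zero, mul_zero]; ring
    · have h2 : 2 ≤ b 0 + b 1 := by
        by_contra hcon
        exact hpc (hp b (by omega))
      rw [hqc, mul_zero, hlay (a 1 + 1) (by omega), mul_zero, zero_mul]; ring
  · have h2 : 2 ≤ b 0 + b 1 := by
      by_contra hcon
      exact hqc (hq b (by omega))
    rw [hlay (a 1) (by omega), hlay (a 1 + 1) (by omega), mul_zero, zero_mul, mul_zero, zero_mul]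
    ring

lemma layer_two (k : ℕ) : layer p q 2 k = if k = 0 ∨ k = 2 then (1:K) else 0 := by
  unfold layer step
  rw [if_neg (by omega : ¬ (2:ℕ) ≤ 1), if_pos rfl]

lemma coeff_main (hp : ∀ e : Fin 2 →₀ ℕ, e 0 + e 1 < 2 → p.coeff e = 0)
    (hq : ∀ e : Fin 2 →₀ ℕ, e 0 + e 1 < 2 → q.coeff e = 0) (e : Fin 2 →₀ ℕ) : MvPowerSeries.coeff (R := K) e (G p q) =
    if 3 ≤ e 0 + e 1 ∧ Even (e 0 + e 1) ∧ (e 1 = 0 ∨ e 0 = 0)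
    then par p q (hist p q (e 0 + e 1)) (e 0 + e 1) else 0 := by
  rw [coeff_G]
  by_cases h3 : 3 ≤ e 0 + e 1
  · rw [NN_hist p q hp hq]
    have hLf : (if 1 ≤ e 1 then ((e 0 + 1 : ℕ) : K) * layer p q (e 0 + e 1) (e 1 - 1) else 0)
        - ((e 1 + 1 : ℕ) : K) * layer p q (e 0 + e 1) (e 1 + 1)
        = Lf (e 0 + e 1) (layer p q (e 0 + e 1)) (e 1) := by
      unfold Lf
      rw [show (e 0 + e 1 - e 1 + 1 : ℕ) = e 0 + 1 by omega]
    rw [hLf, Lf_layer p q (e 0 + e 1) (e 1) h3 (by omega)]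
    unfold dd
    have hNk : NN p q (hist p q (e 0 + e 1)) e
        = Nk p q (hist p q (e 0 + e 1)) (e 0 + e 1) (e 1) := by
      unfold Nk
      rw [show (e 0 + e 1 - e 1 : ℕ) = e 0 by omega]
      rw [← decomp e]
    rw [hNk]
    have hiff : (Even (e 0 + e 1) ∧ (e 1 = 0 ∨ e 1 = e 0 + e 1))
        ↔ (3 ≤ e 0 + e 1 ∧ Even (e 0 + e 1) ∧ (e 1 = 0 ∨ e 0 = 0)) := by
      constructor
      · rintro ⟨hE, hor⟩
        exact ⟨h3, hE, by omega⟩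
      · rintro ⟨_, hE, hor⟩
        exact ⟨hE, by omega⟩
    rw [if_congr hiff rfl rfl]
    ring
  · rw [if_neg (show ¬(3 ≤ e 0 + e 1 ∧ Even (e 0 + e 1) ∧ (e 1 = 0 ∨ e 0 = 0)) from
      fun hc => h3 hc.1)]
    rw [NN_low p q hp hq e (by omega)]
    have h2 : e 0 + e 1 ≤ 2 := by omega
    interval_cases hn : (e 0 + e 1)
    · have h1 : e 1 = 0 := by omega
      have hlay : ∀ j : ℕ, layer p q 0 j = 0 := by
        intro j; unfold layer step; rw [if_pos (by omega : (0:ℕ) ≤ 1)]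
      rw [h1]
      simp [hlay]
    · have hlay : ∀ j : ℕ, layer p q 1 j = 0 := by
        intro j; unfold layer step; rw [if_pos (by omega : (1:ℕ) ≤ 1)]
      simp [hlay]
    · have h1 : e 1 ≤ 2 := by omega
      interval_cases h1' : (e 1)
      · rw [if_neg (by omega), layer_two, if_neg (by omega)]
        ring
      · rw [if_pos (by omega), layer_two, layer_two, if_pos (by omega : (0:ℕ) = 0 ∨ (0:ℕ) = 2),
          if_pos (by omega : (2:ℕ) = 0 ∨ (2:ℕ) = 2)]
        rw [show e 0 + 1 = 2 by omega]
        ring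
      · rw [if_pos (by omega), layer_two, layer_two, if_neg (by omega), if_neg (by omega)]
        ring

lemma layer_le_one (n k : ℕ) (h : n ≤ 1) : layer p q n k = 0 := by
  unfold layer step
  rw [if_pos h]

lemma single_eq_iff0 (m : ℕ) (e : Fin 2 →₀ ℕ) :
    (Finsupp.single (0 : Fin 2) m = e) ↔ (e 0 = m ∧ e 1 = 0) := by
  rw [fin2_eq_iff]
  constructor
  · rintro ⟨ha, hb⟩
    refine ⟨ha ▸ ?_, hb ▸ ?_⟩ <;> simp [Finsupp.single_apply]
  · rintro ⟨ha, hb⟩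
    refine ⟨?_, ?_⟩ <;> simp [Finsupp.single_apply, ha, hb]

lemma single_eq_iff1 (m : ℕ) (e : Fin 2 →₀ ℕ) :
    (Finsupp.single (1 : Fin 2) m = e) ↔ (e 0 = 0 ∧ e 1 = m) := by
  rw [fin2_eq_iff]
  constructor
  · rintro ⟨ha, hb⟩
    refine ⟨ha ▸ ?_, hb ▸ ?_⟩ <;> simp [Finsupp.single_apply]
  · rintro ⟨ha, hb⟩
    refine ⟨?_, ?_⟩ <;> simp [Finsupp.single_apply, ha, hb]

lemma low (e : Fin 2 →₀ ℕ) (h : e 0 + e 1 < 3) :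
    MvPowerSeries.coeff (R := K) e
      (FF p q - ((X 0 : MvPolynomial (Fin 2) K)^2 + (X 1 : MvPolynomial (Fin 2) K)^2
        : MvPolynomial (Fin 2) K)) = 0 := by
  rw [map_sub, MvPowerSeries.coeff_apply]
  rw [MvPolynomial.coeff_coe, MvPolynomial.coeff_add, MvPolynomial.coeff_X_pow,
    MvPolynomial.coeff_X_pow]
  show layer p q (e 0 + e 1) (e 1) - _ = 0
  by_cases h2 : e 0 + e 1 ≤ 1
  · rw [layer_le_one p q _ _ h2]
    rw [if_neg (fun hc => by have := (single_eq_iff0 2 e).mp hc; omega),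
      if_neg (fun hc => by have := (single_eq_iff1 2 e).mp hc; omega)]
    ring
  · have hn : e 0 + e 1 = 2 := by omega
    rw [hn, layer_two]
    by_cases ha : e 1 = 0
    · rw [if_pos (Or.inl ha), if_pos ((single_eq_iff0 2 e).mpr ⟨by omega, ha⟩),
        if_neg (fun hc => by have := (single_eq_iff1 2 e).mp hc; omega)]
      ring
    · by_cases hb : e 1 = 2
      · rw [if_pos (Or.inr hb), if_neg (fun hc => by have := (single_eq_iff0 2 e).mp hc; omega),
          if_pos ((single_eq_iff1 2 e).mpr ⟨by omega, hb⟩)]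
        ring
      · rw [if_neg (by omega), if_neg (fun hc => by have := (single_eq_iff0 2 e).mp hc; omega),
          if_neg (fun hc => by have := (single_eq_iff1 2 e).mp hc; omega)]
        ring

end Focal

theorem exists_focal_values
    (K : Type*) [Field K] [CharZero K]
    (p q : MvPolynomial (Fin 2) K)
    (hp : ∀ e : Fin 2 →₀ ℕ, e 0 + e 1 < 2 → p.coeff e = 0)
    (hq : ∀ e : Fin 2 →₀ ℕ, e 0 + e 1 < 2 → q.coeff e = 0) :
    ∃ (F : MvPowerSeries (Fin 2) K) (s : ℕ → K),
      (∀ e : Fin 2 →₀ ℕ, e 0 + e 1 < 3 →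
        MvPowerSeries.coeff (R := K) e
          (F - ((X 0 : MvPolynomial (Fin 2) K)^2 + (X 1 : MvPolynomial (Fin 2) K)^2
            : MvPolynomial (Fin 2) K)) = 0) ∧
      (∀ j : ℕ, 1 ≤ j →
        MvPowerSeries.coeff (Finsupp.single 0 (2*j+2))
          (psDeriv 0 F * ((X 1 + q : MvPolynomial (Fin 2) K) : MvPowerSeries (Fin 2) K)
            - psDeriv 1 F * ((X 0 + p : MvPolynomial (Fin 2) K) : MvPowerSeries (Fin 2) K))
          = s j ∧
        MvPowerSeries.coeff (Finsupp.single 1 (2*j+2))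
          (psDeriv 0 F * ((X 1 + q : MvPolynomial (Fin 2) K) : MvPowerSeries (Fin 2) K)
            - psDeriv 1 F * ((X 0 + p : MvPolynomial (Fin 2) K) : MvPowerSeries (Fin 2) K))
          = s j) ∧
      (∀ e : Fin 2 →₀ ℕ,
        (¬ ∃ j : ℕ, 1 ≤ j ∧
            (e = Finsupp.single 0 (2*j+2) ∨ e = Finsupp.single 1 (2*j+2))) →
        MvPowerSeries.coeff e
          (psDeriv 0 F * ((X 1 + q : MvPolynomial (Fin 2) K) : MvPowerSeries (Fin 2) K)
            - psDeriv 1 F * ((X 0 + p : MvPolynomial (Fin 2) K) : MvPowerSeries (Fin 2) K))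
          = 0) := by
  refine ⟨Focal.FF p q, fun j => Focal.par p q (Focal.hist p q (2*j+2)) (2*j+2), ?_, ?_, ?_⟩
  · intro e he
    exact Focal.low p q e he
  · intro j hj
    have hG : psDeriv 0 (Focal.FF p q) * ((X 1 + q : MvPolynomial (Fin 2) K) : MvPowerSeries (Fin 2) K)
        - psDeriv 1 (Focal.FF p q) * ((X 0 + p : MvPolynomial (Fin 2) K) : MvPowerSeries (Fin 2) K)
        = Focal.G p q := rfl
    rw [hG]
    constructor
    · set e := (Finsupp.single (0 : Fin 2) (2*j+2) : Fin 2 →₀ ℕ) with hed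
      have h0 : e 0 = 2*j+2 := Finsupp.single_eq_same
      have h1 : e 1 = 0 := Finsupp.single_eq_of_ne (by decide)
      rw [Focal.coeff_main p q hp hq e, h0, h1,
        if_pos ⟨by omega, ⟨j+1, by ring⟩, Or.inl rfl⟩, add_zero]
    · set e := (Finsupp.single (1 : Fin 2) (2*j+2) : Fin 2 →₀ ℕ) with hed
      have h0 : e 0 = 0 := Finsupp.single_eq_of_ne (by decide)
      have h1 : e 1 = 2*j+2 := Finsupp.single_eq_same
      rw [Focal.coeff_main p q hp hq e, h0, h1,
        if_pos ⟨by omega, ⟨j+1, by ring⟩, Or.inr rfl⟩, zero_add]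
  · intro e hne
    have hG : psDeriv 0 (Focal.FF p q) * ((X 1 + q : MvPolynomial (Fin 2) K) : MvPowerSeries (Fin 2) K)
        - psDeriv 1 (Focal.FF p q) * ((X 0 + p : MvPolynomial (Fin 2) K) : MvPowerSeries (Fin 2) K)
        = Focal.G p q := rfl
    rw [hG, Focal.coeff_main p q hp hq e]
    rw [if_neg]
    rintro ⟨h3, ⟨m, hm⟩, hor⟩
    apply hne
    refine ⟨m - 1, by omega, ?_⟩
    rcases hor with h1 | h0
    · exact Or.inl ((Focal.single_eq_iff0 (2*(m-1)+2) e).mpr ⟨by omega, h1⟩).symm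
    · exact Or.inr ((Focal.single_eq_iff1 (2*(m-1)+2) e).mpr ⟨h0, by omega⟩).symm
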